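/- arXiv:1701.01804 — 5 statements merged into one kernel-verified Lean document; each statement's English description precedes it below -/
import Mathlib

section
/- Let G be a group, B ⊆ C ⊆ G be subgroups, and A ⊆ G be a subset such that AB and AC are subgroups of G and C ∩ AB = B. Then the index [AC : AB] equals the index [C : B]. -/
open Pointwise in
theorem stmt2 {G : Type*} [Group G] (A : Set G) (B C HAB HAC : Subgroup G)
    (hBC : B ≤ C)
    (hAB : (HAB : Set G) = A * (B : Set G))
    (hAC : (HAC : Set G) = A * (C : Set G))
    (hcap : (C : Set G) ∩ (HAB : Set G) = (B : Set G)) :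
    HAB.relIndex HAC = B.relIndex C := by
  obtain ⟨a, ha⟩ : A.Nonempty := by
    by_contra h
    rw [Set.not_nonempty_iff_eq_empty] at h
    have h1 : (1:G) ∈ (HAB : Set G) := HAB.one_mem
    rw [hAB, h, Set.empty_mul] at h1
    exact h1
  have haAB : a ∈ HAB := by
    rw [← SetLike.mem_coe, hAB]
    exact ⟨a, ha, 1, B.one_mem, mul_one a⟩
  have haAC : a ∈ HAC := by
    rw [← SetLike.mem_coe, hAC]
    exact ⟨a, ha, 1, C.one_mem, mul_one a⟩
  have hCle : C ≤ HAC := by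
    intro c hc
    have hac : a * c ∈ HAC := by
      rw [← SetLike.mem_coe, hAC]; exact ⟨a, ha, c, hc, rfl⟩
    have := HAC.mul_mem (HAC.inv_mem haAC) hac
    rwa [inv_mul_cancel_left] at this
  have hBle : B ≤ HAB := by
    intro b hb
    have hab : a * b ∈ HAB := by
      rw [← SetLike.mem_coe, hAB]; exact ⟨a, ha, b, hb, rfl⟩
    have := HAB.mul_mem (HAB.inv_mem haAB) hab
    rwa [inv_mul_cancel_left] at this
  have hABle : HAB ≤ HAC := by
    intro x hx
    rw [← SetLike.mem_coe, hAB] at hx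
    obtain ⟨a', ha', b, hb, rfl⟩ := hx
    rw [← SetLike.mem_coe, hAC]
    exact ⟨a', ha', b, hBC hb, rfl⟩
  rw [Subgroup.relIndex, Subgroup.relIndex, Subgroup.index, Subgroup.index]
  refine (Nat.card_eq_of_bijective
    (Quotient.map' (fun c : C => (⟨(c : G), hCle c.2⟩ : HAC)) ?_) ⟨?_, ?_⟩).symm
  · intro x y hxy
    rw [QuotientGroup.leftRel_apply, Subgroup.mem_subgroupOf] at hxy ⊢
    exact hBle hxy
  · intro x y hxy
    induction x using Quotient.inductionOn' with | h x => ?_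
    induction y using Quotient.inductionOn' with | h y => ?_
    rw [Quotient.map'_mk'', Quotient.map'_mk'', Quotient.eq''] at hxy
    rw [Quotient.eq'']
    rw [QuotientGroup.leftRel_apply, Subgroup.mem_subgroupOf] at hxy ⊢
    have hmem : ((x : G)⁻¹ * y) ∈ (C : Set G) ∩ (HAB : Set G) :=
      ⟨C.mul_mem (C.inv_mem x.2) y.2, hxy⟩
    rw [hcap] at hmem
    exact hmem
  · intro x
    induction x using Quotient.inductionOn' with | h x => ?_
    have hxinv : ((x : G))⁻¹ ∈ (HAC : Set G) := HAC.inv_mem x.2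
    rw [hAC] at hxinv
    obtain ⟨a', ha', c, hc, heq⟩ := hxinv
    refine ⟨Quotient.mk'' (⟨c⁻¹, C.inv_mem hc⟩ : C), ?_⟩
    rw [Quotient.map'_mk'', Quotient.eq'']
    rw [QuotientGroup.leftRel_apply, Subgroup.mem_subgroupOf]
    have ha'AB : a' ∈ HAB := by
      rw [← SetLike.mem_coe, hAB]; exact ⟨a', ha', 1, B.one_mem, mul_one a'⟩
    have hx : (x : G) = c⁻¹ * a'⁻¹ := by
      rw [← inv_inv (x : G), ← heq, mul_inv_rev]
    show ((⟨c⁻¹, hCle (C.inv_mem hc)⟩ : HAC) : G)⁻¹ * (x : G) ∈ HAB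
    simp only [inv_inv]
    rw [hx, mul_inv_cancel_left]
    exact HAB.inv_mem ha'AB
end

section
/- Let α be an endomorphism of a topological group G and V a compact open subgroup with V ⊆ α(V). Then every element x of V admits an α-regressive trajectory inside V, i.e., a sequence (x_{-n})_{n≥0} in V with x_0 = x and α(x_{-n-1}) = x_{-n} for all n. -/
theorem stmt5 {G : Type*} [Group G] [TopologicalSpace G] [IsTopologicalGroup G]
    (α : G →* G) (hα : Continuous α) (V : Subgroup G)
    (hVc : IsCompact (V : Set G)) (hVo : IsOpen (V : Set G))
    (hsub : (V : Set G) ⊆ ⇑α '' (V : Set G)) :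
    ∀ x ∈ V, ∃ f : ℕ → G, (∀ n, f n ∈ V) ∧ f 0 = x ∧ ∀ n, α (f (n + 1)) = f n := by
  intro x hx
  have key : ∀ y : V, ∃ z : V, α z = y := fun y => by
    obtain ⟨z, hz, he⟩ := hsub y.2
    exact ⟨⟨z, hz⟩, he⟩
  let g : ℕ → V := fun n => Nat.rec ⟨x, hx⟩ (fun _ y => (key y).choose) n
  refine ⟨fun n => (g n).1, fun n => (g n).2, ?_, fun n => ?_⟩
  · rfl
  · show α (g (n + 1)).1 = (g n).1
    have h : g (n + 1) = (key (g n)).choose := rfl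
    rw [h]
    exact (key (g n)).choose_spec
end

section
/- Let g be a Lie algebra over a field K with an absolute value, endowed with a topology making it a topological Lie algebra, and α : g → g a continuous Lie algebra endomorphism. Then the set par(α) := {x ∈ g : the orbit {αⁿ(x) : n ∈ ℕ₀} is relatively compact} is a Lie subalgebra of g. -/
private lemma compact_closure_of_subset_compact' {L : Type*} [TopologicalSpace L] [R1Space L]
    {s t : Set L} (ht : IsCompact t) (h : s ⊆ t) : IsCompact (closure s) :=
  ht.closure.of_isClosed_subset isClosed_closure (closure_mono h)

theorem stmt6 {K L : Type*} [NontriviallyNormedField K] [LieRing L] [LieAlgebra K L]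
    [TopologicalSpace L] [IsTopologicalAddGroup L] [ContinuousSMul K L]
    (hbr : Continuous fun p : L × L => ⁅p.1, p.2⁆)
    (α : L →ₗ⁅K⁆ L) (hα : Continuous α) :
    ∃ S : LieSubalgebra K L,
      (S : Set L) =
        {x : L | IsCompact (closure (Set.range fun n : ℕ => (⇑α)^[n] x))} := by
  have hadd : ∀ (n : ℕ) (x y : L), (⇑α)^[n] (x + y) = (⇑α)^[n] x + (⇑α)^[n] y := by
    intro n; induction n with
    | zero => intro x y; simp
    | succ n ih => intro x y; simp [Function.iterate_succ_apply, map_add, ih]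
  have hsmul : ∀ (n : ℕ) (c : K) (x : L), (⇑α)^[n] (c • x) = c • (⇑α)^[n] x := by
    intro n; induction n with
    | zero => intro c x; simp
    | succ n ih => intro c x; simp [Function.iterate_succ_apply, map_smul, ih]
  have hlie : ∀ (n : ℕ) (x y : L), (⇑α)^[n] ⁅x, y⁆ = ⁅(⇑α)^[n] x, (⇑α)^[n] y⁆ := by
    intro n; induction n with
    | zero => intro x y; simp
    | succ n ih => intro x y; simp [Function.iterate_succ_apply, LieHom.map_lie, ih]
  refine ⟨⟨⟨⟨⟨{x : L | IsCompact (closure (Set.range fun n : ℕ => (⇑α)^[n] x))}, ?_⟩, ?_⟩, ?_⟩, ?_⟩, rfl⟩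
  · -- add_mem
    intro x y hx hy
    refine compact_closure_of_subset_compact' ((hx.prod hy).image continuous_add) ?_
    rintro _ ⟨n, rfl⟩
    exact ⟨((⇑α)^[n] x, (⇑α)^[n] y),
      ⟨subset_closure ⟨n, rfl⟩, subset_closure ⟨n, rfl⟩⟩, (hadd n x y).symm⟩
  · -- zero_mem
    simp only [Set.mem_setOf_eq, map_zero]
    have : (Set.range fun n : ℕ => (⇑α)^[n] (0 : L)) = {0} := by
      ext z; simp [Function.iterate_fixed (α.map_zero)]
    rw [this]
    exact isCompact_singleton.closure
  · -- smul_mem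
    intro c x hx
    refine compact_closure_of_subset_compact' (hx.image (continuous_const_smul c)) ?_
    rintro _ ⟨n, rfl⟩
    exact ⟨(⇑α)^[n] x, subset_closure ⟨n, rfl⟩, (hsmul n c x).symm⟩
  · -- lie_mem
    intro x y hx hy
    refine compact_closure_of_subset_compact' ((hx.prod hy).image hbr) ?_
    rintro _ ⟨n, rfl⟩
    exact ⟨((⇑α)^[n] x, (⇑α)^[n] y),
      ⟨subset_closure ⟨n, rfl⟩, subset_closure ⟨n, rfl⟩⟩, (hlie n x y).symm⟩
end

section
/- Let G be a topological group in which every ascending union of closed subgroups is closed, and α an endomorphism of G. Suppose (V_n)_{n∈ℕ} is a decreasing sequence of closed subgroups forming a basis of identity neighbourhoods. Then the contraction group con(α) = ⋂_{n∈ℕ} ⋃_{m∈ℕ} ⋂_{k≥m} α^{-k}(V_n), and con(α) is closed in G. -/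
theorem stmt10 {G : Type*} [Group G] [TopologicalSpace G] [IsTopologicalGroup G]
    (hasc : ∀ H : ℕ → Subgroup G, Monotone H → (∀ n, IsClosed (H n : Set G)) →
      IsClosed (⋃ n, (H n : Set G)))
    (α : G →* G) (hα : Continuous α)
    (V : ℕ → Subgroup G) (hanti : Antitone V)
    (hclosed : ∀ n, IsClosed (V n : Set G))
    (hnbhd : ∀ n, (V n : Set G) ∈ nhds (1 : G))
    (hbasis : ∀ W ∈ nhds (1 : G), ∃ n, (V n : Set G) ⊆ W) :
    ({x : G | Filter.Tendsto (fun n : ℕ => (⇑α)^[n] x) Filter.atTop (nhds 1)} =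
      ⋂ n : ℕ, ⋃ m : ℕ, ⋂ k : ℕ, ⋂ (_ : m ≤ k), (⇑α)^[k] ⁻¹' (V n : Set G)) ∧
    IsClosed {x : G | Filter.Tendsto (fun n : ℕ => (⇑α)^[n] x) Filter.atTop (nhds 1)} := by
  have key : {x : G | Filter.Tendsto (fun n : ℕ => (⇑α)^[n] x) Filter.atTop (nhds 1)} =
      ⋂ n : ℕ, ⋃ m : ℕ, ⋂ k : ℕ, ⋂ (_ : m ≤ k), (⇑α)^[k] ⁻¹' (V n : Set G) := by
    ext x
    simp only [Set.mem_setOf_eq, Set.mem_iInter, Set.mem_iUnion, Set.mem_preimage]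
    constructor
    · intro hx n
      have h1 : (fun k : ℕ => (⇑α)^[k] x) ⁻¹' (V n : Set G) ∈ Filter.atTop := hx (hnbhd n)
      rw [Filter.mem_atTop_sets] at h1
      obtain ⟨m, hm⟩ := h1
      exact ⟨m, fun k hk => hm k hk⟩
    · intro hx
      rw [Filter.tendsto_def]
      intro W hW
      obtain ⟨n, hn⟩ := hbasis W hW
      obtain ⟨m, hm⟩ := hx n
      exact Filter.mem_of_superset (Filter.mem_atTop m) fun k hk => hn (hm k hk)
  refine ⟨key, ?_⟩
  rw [key]
  refine isClosed_iInter fun n => ?_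
  let β : Monoid.End G := α
  have hβ : ⇑β = ⇑α := rfl
  set H : ℕ → Subgroup G :=
    fun m => ⨅ k ∈ Set.Ici m, (V n).comap ((β ^ k : Monoid.End G) : G →* G) with hH
  have hco : ∀ m, ((H m : Subgroup G) : Set G)
      = ⋂ k : ℕ, ⋂ (_ : m ≤ k), (⇑α)^[k] ⁻¹' (V n : Set G) := by
    intro m
    ext x
    simp only [hH, Subgroup.coe_iInf, Subgroup.coe_comap, Monoid.End.coe_pow, Set.mem_Ici,
      Set.mem_iInter, Set.mem_preimage, hβ, SetLike.mem_coe]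
    exact forall₂_congr fun k hk => by
      exact Iff.of_eq (congrArg (· ∈ V n) (congrFun (show ⇑(β ^ k) = (⇑α)^[k] by rw [Monoid.End.coe_pow, hβ]) x))
  have hmono : Monotone H := by
    intro a b hab
    refine le_iInf₂ fun k hk => ?_
    exact iInf₂_le k (le_trans hab hk)
  have hcl : ∀ m, IsClosed ((H m : Subgroup G) : Set G) := by
    intro m
    rw [hco]
    exact isClosed_iInter fun k => isClosed_iInter fun _ =>
      (hclosed n).preimage (hα.iterate k)
  have := hasc H hmono hcl
  convert this using 1
  exact (Set.iUnion_congr hco).symm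
end

section
/- Let G be a topological group, α a continuous endomorphism, and U a compact open subgroup. Define U₀ := U and U_{n+1} := U ∩ α(U_n). Then the set U₊ of all x ∈ U admitting an α-regressive trajectory inside U equals ⋂_{n≥0} U_n, and satisfies U₊ ⊆ α(U₊). -/
/-- The descending sequence `U₀ = U`, `U_{n+1} = U ∩ α(U_n)`. -/
def Useq {G : Type*} [Group G] (α : G →* G) (U : Set G) : ℕ → Set G
  | 0 => U
  | n + 1 => U ∩ ⇑α '' Useq α U n

theorem stmt16 {G : Type*} [Group G] [TopologicalSpace G] [IsTopologicalGroup G]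
    [LocallyCompactSpace G] [TotallyDisconnectedSpace G]
    (α : G →* G) (hα : Continuous α) (U : Subgroup G)
    (hUc : IsCompact (U : Set G)) (hUo : IsOpen (U : Set G)) :
    ({x : G | x ∈ U ∧ ∃ f : ℕ → G, (∀ n, f n ∈ U) ∧ f 0 = x ∧ ∀ n, α (f (n + 1)) = f n} =
      ⋂ n : ℕ, Useq α (U : Set G) n) ∧
    {x : G | x ∈ U ∧ ∃ f : ℕ → G, (∀ n, f n ∈ U) ∧ f 0 = x ∧ ∀ n, α (f (n + 1)) = f n} ⊆
      ⇑α '' {x : G | x ∈ U ∧ ∃ f : ℕ → G, (∀ n, f n ∈ U) ∧ f 0 = x ∧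
        ∀ n, α (f (n + 1)) = f n} := by
  haveI : T1Space G := ⟨fun x => by
    rw [← totallyDisconnectedSpace_iff_connectedComponent_singleton.mp ‹_› x]
    exact isClosed_connectedComponent⟩
  haveI : T2Space G := inferInstance
  have hUcl : IsClosed (U : Set G) := U.isClosed_of_isOpen hUo
  constructor
  · ext x
    simp only [Set.mem_setOf_eq, Set.mem_iInter]
    constructor
    · rintro ⟨hx, f, hfU, hf0, hfrec⟩ n
      -- forward direction: trajectory gives membership in each Useq n
      have key : ∀ n k, f k ∈ Useq α (U : Set G) n := by
        intro n
        induction n with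
        | zero => intro k; exact hfU k
        | succ n ih =>
          intro k
          exact ⟨hfU k, f (k + 1), ih (k + 1), hfrec k⟩
      rw [← hf0]; exact key n 0
    · intro hx
      have hxU : x ∈ U := hx 0
      refine ⟨hxU, ?_⟩
      -- finite partial trajectories exist
      have partial_traj : ∀ n (y : G), y ∈ Useq α (U : Set G) n →
          ∃ g : ℕ → G, (∀ k, g k ∈ U) ∧ g 0 = y ∧ ∀ k < n, α (g (k + 1)) = g k := by
        intro n
        induction n with
        | zero =>
          intro y hy
          exact ⟨fun k => if k = 0 then y else 1, fun k => by
            by_cases h : k = 0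
            · simpa [h, Useq] using hy
            · simp [h, U.one_mem], by simp, fun k hk => by omega⟩
        | succ n ih =>
          rintro y ⟨hyU, z, hz, hzy⟩
          obtain ⟨g, hgU, hg0, hgrec⟩ := ih z hz
          refine ⟨fun k => Nat.rec y (fun k _ => g k) k, fun k => ?_, rfl, fun k hk => ?_⟩
          · cases k with
            | zero => exact hyU
            | succ k => exact hgU k
          · cases k with
            | zero => simpa [hg0] using hzy
            | succ k => exact hgrec k (by omega)
      -- compactness argument
      set T : ℕ → Set (ℕ → G) := fun n =>
        {f : ℕ → G | (∀ k, f k ∈ U) ∧ f 0 = x ∧ ∀ k < n, α (f (k + 1)) = f k} with hT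
      have hTne : ∀ n, (T n).Nonempty := by
        intro n
        obtain ⟨g, hgU, hg0, hgrec⟩ := partial_traj n x (hx n)
        exact ⟨g, hgU, hg0, hgrec⟩
      have hTanti : ∀ n, T (n + 1) ⊆ T n := by
        rintro n f ⟨h1, h2, h3⟩
        exact ⟨h1, h2, fun k hk => h3 k (by omega)⟩
      have hTcl : ∀ n, IsClosed (T n) := by
        intro n
        have : T n = (Set.pi Set.univ fun _ : ℕ => (U : Set G)) ∩
            ({f : ℕ → G | f 0 = x} ∩ ⋂ k ∈ Set.Iio n, {f : ℕ → G | α (f (k + 1)) = f k}) := by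
          ext f
          simp [hT, Set.mem_pi, and_assoc]
        rw [this]
        refine (isClosed_set_pi fun _ _ => hUcl).inter
          ((isClosed_eq (continuous_apply 0) continuous_const).inter
            (isClosed_biInter fun k _ => isClosed_eq
              (hα.comp (continuous_apply (k + 1))) (continuous_apply k)))
      have hT0c : IsCompact (T 0) := by
        have hK : IsCompact (Set.pi Set.univ fun _ : ℕ => (U : Set G)) :=
          isCompact_univ_pi fun _ => hUc
        exact hK.of_isClosed_subset (hTcl 0) (fun f hf => by
          simpa [Set.mem_pi] using hf.1)
      obtain ⟨f, hf⟩ := IsCompact.nonempty_iInter_of_sequence_nonempty_isCompact_isClosed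
        T hTanti hTne hT0c hTcl
      simp only [Set.mem_iInter] at hf
      exact ⟨f, (hf 0).1, (hf 0).2.1, fun k => (hf (k + 1)).2.2 k (by omega)⟩
  · rintro x ⟨hx, f, hfU, hf0, hfrec⟩
    exact ⟨f 1, ⟨hfU 1, fun n => f (n + 1), fun n => hfU (n + 1), rfl,
      fun n => hfrec (n + 1)⟩, by rw [hfrec 0, hf0]⟩
end
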